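/- arXiv:2208.06740 — 2 statements merged into one kernel-verified Lean document; each statement's English description precedes it below -/
import Mathlib

section
/- Let Ω ⊆ ℝ^{d+1} be an open set which is M₀-quasiconvex: for all z, z' ∈ Ω there is a rectifiable curve contained in Ω joining z to z' with length at most M₀|z−z'|. Let g : Ω → ℝ^{d+1} be C¹, let z₀ ∈ Ω with Dg(z₀) invertible and ‖Dg(z₀)‖·‖Dg(z₀)^{-1}‖ ≤ K, and suppose that for some δ > 0 one has ‖Dg(z)∘Dg(z₀)^{-1} − I‖ ≤ δ for all z ∈ Ω. Define L_{z₀}(z) = z₀ + Dg(z₀)(z − z₀) and φ = g ∘ L_{z₀}^{-1} on L_{z₀}(Ω). Then there is a constant C depending only on M₀ and K such that (1 − Cδ)|w − w'| ≤ |φ(w) − φ(w')| ≤ (1 + Cδ)|w − w'| for all w, w' ∈ L_{z₀}(Ω), and ‖Dφ(w) − I‖ ≤ δ for all w ∈ L_{z₀}(Ω). -/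
open Metric MeasureTheory Set
open scoped ENNReal NNReal

noncomputable section


open Metric Set
open scoped ENNReal NNReal

lemma key_curve_estimate {E F : Type*} [NormedAddCommGroup E] [NormedSpace ℝ E]
    [NormedAddCommGroup F] [NormedSpace ℝ F]
    {f : E → F} {f' : E → E →L[ℝ] F} {U : Set E} (hU : IsOpen U) {δ : ℝ} (hδ0 : 0 ≤ δ)
    (hd : ∀ x ∈ U, HasFDerivAt f (f' x) x) (hb : ∀ x ∈ U, ‖f' x‖ ≤ δ)
    {γ : ℝ → E} (hγc : ContinuousOn γ (Icc 0 1)) (hγU : ∀ t ∈ Icc (0:ℝ) 1, γ t ∈ U)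
    {ℓ : ℝ} (hℓ : 0 ≤ ℓ) (hvar : eVariationOn γ (Icc 0 1) ≤ ENNReal.ofReal ℓ) :
    ‖f (γ 1) - f (γ 0)‖ ≤ δ * ℓ := by
  -- compact image and thickening
  have hKc : IsCompact (γ '' Icc 0 1) := (isCompact_Icc).image_of_continuousOn hγc
  have hKU : γ '' Icc 0 1 ⊆ U := by rintro x ⟨t, ht, rfl⟩; exact hγU t ht
  obtain ⟨ε, hε, hεU⟩ := hKc.exists_thickening_subset_open hU hKU
  -- uniform continuity
  have huc := isCompact_Icc.uniformContinuousOn_of_continuous hγc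
  rw [Metric.uniformContinuousOn_iff] at huc
  obtain ⟨η, hη, hmod⟩ := huc ε hε
  obtain ⟨n, hn⟩ := exists_nat_one_div_lt hη
  set N : ℕ := n + 1 with hN
  have hN0 : (0:ℝ) < N := by positivity
  set u : ℕ → ℝ := fun i => (min i N : ℕ) / N with hu
  have humono : Monotone u := fun i j hij => by
    have : (min i N : ℕ) ≤ min j N := min_le_min hij le_rfl
    simp only [hu]
    gcongr <;> exact_mod_cast this

  have humem : ∀ i, u i ∈ Icc (0:ℝ) 1 := fun i => by
    constructor
    · positivity
    · rw [div_le_one hN0]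
      exact_mod_cast min_le_right i N
  have hu0 : u 0 = 0 := by simp [hu]
  have huN : u N = 1 := by
    simp only [hu, min_self]
    field_simp
  have hstep : ∀ i, dist (u (i+1)) (u i) < η := by
    intro i
    have h1 : (min (i+1) N : ℕ) ≤ min i N + 1 := by omega
    have h2 : (min i N : ℕ) ≤ min (i+1) N := min_le_min (Nat.le_succ i) le_rfl
    rw [Real.dist_eq, abs_of_nonneg (by linarith [humono (Nat.le_succ i)] : (0:ℝ) ≤ u (i+1) - u i)]
    have : u (i+1) - u i ≤ 1 / N := by
      simp only [hu]
      rw [div_sub_div_same, div_le_div_iff₀ hN0 hN0]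
      have h1' : ((min (i+1) N : ℕ):ℝ) ≤ ((min i N : ℕ):ℝ) + 1 := by exact_mod_cast h1
      nlinarith
    calc u (i+1) - u i ≤ 1 / N := this
      _ < η := by exact_mod_cast hn
  -- each consecutive pair estimate
  have hpair : ∀ i, ‖f (γ (u (i+1))) - f (γ (u i))‖ ≤ δ * ‖γ (u (i+1)) - γ (u i)‖ := by
    intro i
    have hball : ball (γ (u i)) ε ⊆ U :=
      (ball_subset_thickening (mem_image_of_mem γ (humem i)) ε).trans hεU
    have hconv : Convex ℝ (ball (γ (u i)) ε) := convex_ball _ _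
    have hmem1 : γ (u i) ∈ ball (γ (u i)) ε := mem_ball_self hε
    have hmem2 : γ (u (i+1)) ∈ ball (γ (u i)) ε := by
      rw [mem_ball]
      exact hmod (u (i+1)) (humem _) (u i) (humem _) (hstep i)
    exact hconv.norm_image_sub_le_of_norm_hasFDerivWithin_le
      (fun x hx => (hd x (hball hx)).hasFDerivWithinAt)
      (fun x hx => hb x (hball hx)) hmem1 hmem2
  -- sum of distances bounded by variation
  have hsum : ∑ i ∈ Finset.range N, ‖γ (u (i+1)) - γ (u i)‖ ≤ ℓ := by
    have h1 : (∑ i ∈ Finset.range N, edist (γ (u (i+1))) (γ (u i))) ≤ eVariationOn γ (Icc 0 1) :=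
      eVariationOn.sum_le (f := γ) (n := N) humono humem
    have h2 : ENNReal.ofReal (∑ i ∈ Finset.range N, ‖γ (u (i+1)) - γ (u i)‖)
        = ∑ i ∈ Finset.range N, edist (γ (u (i+1))) (γ (u i)) := by
      rw [ENNReal.ofReal_sum_of_nonneg (fun i _ => norm_nonneg _)]
      refine Finset.sum_congr rfl fun i _ => ?_
      rw [edist_dist, dist_eq_norm]
    rw [← ENNReal.ofReal_le_ofReal_iff hℓ, h2]
    exact h1.trans hvar
  -- telescope
  have htel : f (γ 1) - f (γ 0) = ∑ i ∈ Finset.range N, (f (γ (u (i+1))) - f (γ (u i))) := by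
    rw [Finset.sum_range_sub (fun i => f (γ (u i)))]
    rw [hu0, huN]
  calc ‖f (γ 1) - f (γ 0)‖ = ‖∑ i ∈ Finset.range N, (f (γ (u (i+1))) - f (γ (u i)))‖ := by
        rw [htel]
    _ ≤ ∑ i ∈ Finset.range N, ‖f (γ (u (i+1))) - f (γ (u i))‖ := norm_sum_le _ _
    _ ≤ ∑ i ∈ Finset.range N, δ * ‖γ (u (i+1)) - γ (u i)‖ := Finset.sum_le_sum fun i _ => hpair i
    _ = δ * ∑ i ∈ Finset.range N, ‖γ (u (i+1)) - γ (u i)‖ := by rw [Finset.mul_sum]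
    _ ≤ δ * ℓ := mul_le_mul_of_nonneg_left hsum hδ0

set_option maxHeartbeats 2000000 in
/-- **Proposition `p:phibilip`**: let `Ω ⊆ ℝ^{d+1}` be open and `M₀`-quasiconvex, `g : Ω → ℝ^{d+1}`
be `C¹`, `z₀ ∈ Ω`, `Dg(z₀)` invertible with inverse `B` and condition number `≤ K`, and suppose
`‖Dg(z) ∘ Dg(z₀)⁻¹ − I‖ ≤ δ` on `Ω`.  With `L(z) = z₀ + Dg(z₀)(z − z₀)` and `φ = g ∘ L⁻¹`,
the map `φ` is `(1 + Cδ)`-bi-Lipschitz on `L(Ω)` and `‖Dφ(w) − I‖ ≤ δ` there,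
where `C` depends only on `M₀` and `K`. -/
theorem bilipschitz_of_slowly_varying_derivative (d : ℕ) (M₀ K : ℝ) :
    ∃ C : ℝ, 0 < C ∧
      ∀ (Ω : Set (EuclideanSpace ℝ (Fin (d + 1)))) (g : EuclideanSpace ℝ (Fin (d + 1)) → EuclideanSpace ℝ (Fin (d + 1))) (z₀ : EuclideanSpace ℝ (Fin (d + 1))) (δ : ℝ) (B : EuclideanSpace ℝ (Fin (d + 1)) →L[ℝ] EuclideanSpace ℝ (Fin (d + 1))),
        IsOpen Ω →
        -- `Ω` is `M₀`-quasiconvex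
        (∀ z ∈ Ω, ∀ z' ∈ Ω, ∃ γ : ℝ → (EuclideanSpace ℝ (Fin (d + 1))),
          ContinuousOn γ (Set.Icc 0 1) ∧ γ 0 = z ∧ γ 1 = z' ∧
          (∀ t ∈ Set.Icc (0 : ℝ) 1, γ t ∈ Ω) ∧
          eVariationOn γ (Set.Icc 0 1) ≤ ENNReal.ofReal (M₀ * dist z z')) →
        ContDiffOn ℝ 1 g Ω →
        z₀ ∈ Ω →
        -- `B = Dg(z₀)⁻¹`
        (fderiv ℝ g z₀).comp B = ContinuousLinearMap.id ℝ (EuclideanSpace ℝ (Fin (d + 1))) →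
        B.comp (fderiv ℝ g z₀) = ContinuousLinearMap.id ℝ (EuclideanSpace ℝ (Fin (d + 1))) →
        ‖fderiv ℝ g z₀‖ * ‖B‖ ≤ K →
        0 < δ →
        (∀ z ∈ Ω, ‖(fderiv ℝ g z).comp B - ContinuousLinearMap.id ℝ (EuclideanSpace ℝ (Fin (d + 1)))‖ ≤ δ) →
        -- conclusions about `φ = g ∘ L_{z₀}⁻¹` on `L_{z₀}(Ω)`
        (∀ w ∈ (fun z => z₀ + fderiv ℝ g z₀ (z - z₀)) '' Ω,
          ∀ w' ∈ (fun z => z₀ + fderiv ℝ g z₀ (z - z₀)) '' Ω,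
            (1 - C * δ) * dist w w' ≤
                dist (g (z₀ + B (w - z₀))) (g (z₀ + B (w' - z₀))) ∧
              dist (g (z₀ + B (w - z₀))) (g (z₀ + B (w' - z₀))) ≤ (1 + C * δ) * dist w w') ∧
        (∀ w ∈ (fun z => z₀ + fderiv ℝ g z₀ (z - z₀)) '' Ω,
          ‖fderiv ℝ (fun w' => g (z₀ + B (w' - z₀))) w - ContinuousLinearMap.id ℝ (EuclideanSpace ℝ (Fin (d + 1)))‖ ≤ δ) := by
  refine ⟨max (M₀ * K) 1, lt_of_lt_of_le one_pos (le_max_right _ _), ?_⟩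
  set C := max (M₀ * K) 1 with hCdef
  intro Ω g z₀ δ B hΩ hqc hg hz₀ hAB hBA hK hδpos hδ
  set A := fderiv ℝ g z₀ with hA
  set ψ : EuclideanSpace ℝ (Fin (d + 1)) → EuclideanSpace ℝ (Fin (d + 1)) :=
    fun w => z₀ + B (w - z₀) with hψ
  have hψcont : Continuous ψ := by
    apply Continuous.add continuous_const
    exact B.continuous.comp (continuous_id.sub continuous_const)
  set U : Set (EuclideanSpace ℝ (Fin (d + 1))) := ψ ⁻¹' Ω with hUdef
  have hUopen : IsOpen U := hΩ.preimage hψcont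
  have hψL : ∀ z, ψ (z₀ + A (z - z₀)) = z := by
    intro z
    have h0 : B (A (z - z₀)) = z - z₀ := by
      have := DFunLike.congr_fun hBA (z - z₀)
      simpa using this
    show z₀ + B (z₀ + A (z - z₀) - z₀) = z
    rw [add_sub_cancel_left, h0]
    abel
  have hLmem : ∀ z ∈ Ω, (z₀ + A (z - z₀)) ∈ U := by
    intro z hz
    show ψ (z₀ + A (z - z₀)) ∈ Ω
    rw [hψL]
    exact hz
  -- derivative of φ at points of U
  have hφd : ∀ w ∈ U, HasFDerivAt (fun w' => g (z₀ + B (w' - z₀)))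
      ((fderiv ℝ g (ψ w)).comp B) w := by
    intro w hw
    have hgd : HasFDerivAt g (fderiv ℝ g (ψ w)) (ψ w) := by
      have := (hg.contDiffAt (hΩ.mem_nhds hw)).differentiableAt one_ne_zero
      exact this.hasFDerivAt
    have h1 : HasFDerivAt (fun w' : EuclideanSpace ℝ (Fin (d + 1)) => w' - z₀)
        (ContinuousLinearMap.id ℝ (EuclideanSpace ℝ (Fin (d + 1)))) w :=
      (hasFDerivAt_id w).sub_const z₀
    have h2 := (B.hasFDerivAt.comp w h1)
    rw [ContinuousLinearMap.comp_id] at h2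
    have h3 : HasFDerivAt ψ B w := h2.const_add z₀
    exact hgd.comp w h3
  have hDφ : ∀ w ∈ U,
      ‖(fderiv ℝ g (ψ w)).comp B - ContinuousLinearMap.id ℝ (EuclideanSpace ℝ (Fin (d + 1)))‖ ≤ δ :=
    fun w hw => hδ (ψ w) hw
  have hK0 : 0 ≤ K := le_trans (mul_nonneg (norm_nonneg _) (norm_nonneg _)) hK
  constructor
  · -- bi-Lipschitz estimate
    rintro w ⟨z, hz, rfl⟩ w' ⟨z', hz', rfl⟩
    beta_reduce
    set w : EuclideanSpace ℝ (Fin (d + 1)) := z₀ + A (z - z₀) with hw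
    set w' : EuclideanSpace ℝ (Fin (d + 1)) := z₀ + A (z' - z₀) with hw'
    obtain ⟨γ, hγc, hγ0, hγ1, hγΩ, hγvar⟩ := hqc z hz z' hz'
    set η : ℝ → EuclideanSpace ℝ (Fin (d + 1)) := fun t => z₀ + A (γ t - z₀) with hη
    have hηc : ContinuousOn η (Set.Icc 0 1) := by
      apply ContinuousOn.add continuousOn_const
      exact A.continuous.comp_continuousOn (hγc.sub continuousOn_const)
    have hηU : ∀ t ∈ Set.Icc (0:ℝ) 1, η t ∈ U := fun t ht => hLmem (γ t) (hγΩ t ht)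
    -- L is Lipschitz with constant ‖A‖₊
    have hLlip : LipschitzWith ‖A‖₊ (fun z => z₀ + A (z - z₀)) := by
      apply LipschitzWith.of_dist_le_mul
      intro a b
      simp only [dist_eq_norm, add_sub_add_left_eq_sub, ← map_sub]
      calc ‖A (a - z₀ - (b - z₀))‖ = ‖A (a - b)‖ := by congr 1; abel
        _ ≤ ‖A‖ * ‖a - b‖ := A.le_opNorm _
    have hηvar : eVariationOn η (Set.Icc 0 1) ≤ ENNReal.ofReal (C * dist w w') := by
      have h1 : eVariationOn η (Set.Icc 0 1) ≤ ‖A‖₊ * eVariationOn γ (Set.Icc 0 1) :=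
        hLlip.lipschitzOnWith.comp_eVariationOn_le (Set.mapsTo_univ _ _)
      have h2 : (‖A‖₊ : ℝ≥0∞) * eVariationOn γ (Set.Icc 0 1)
          ≤ ENNReal.ofReal ‖A‖ * ENNReal.ofReal (M₀ * dist z z') := by
        rw [← enorm_eq_nnnorm, ← ofReal_norm]
        exact mul_le_mul_right hγvar _
      have h3 : ENNReal.ofReal ‖A‖ * ENNReal.ofReal (M₀ * dist z z')
          = ENNReal.ofReal (‖A‖ * (M₀ * dist z z')) := (ENNReal.ofReal_mul (norm_nonneg A)).symm
      have hzd : dist z z' ≤ ‖B‖ * dist w w' := by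
        have heq : z - z' = B (w - w') := by
          have e1 := hψL z
          have e2 := hψL z'
          calc z - z' = ψ w - ψ w' := by rw [e1, e2]
            _ = B (w - z₀) - B (w' - z₀) := by simp [hψ]
            _ = B (w - w') := by rw [← map_sub]; congr 1; abel
        rw [dist_eq_norm, dist_eq_norm, heq]
        exact B.le_opNorm _
      have h4 : ‖A‖ * (M₀ * dist z z') ≤ C * dist w w' := by
        have hd0 : (0:ℝ) ≤ dist w w' := dist_nonneg
        have hd0' : (0:ℝ) ≤ dist z z' := dist_nonneg
        have hA0 : (0:ℝ) ≤ ‖A‖ := norm_nonneg _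
        have hB0 : (0:ℝ) ≤ ‖B‖ := norm_nonneg _
        rcases le_or_gt 0 M₀ with hM | hM
        · have hC1 : M₀ * K ≤ C := le_max_left _ _
          nlinarith [mul_le_mul_of_nonneg_left hzd (mul_nonneg hA0 hM),
            mul_le_mul_of_nonneg_right hK (mul_nonneg hM hd0)]
        · have hC1 : (1:ℝ) ≤ C := le_max_right _ _
          have h5 : M₀ * dist z z' ≤ 0 := mul_nonpos_of_nonpos_of_nonneg hM.le hd0'
          have h6 : ‖A‖ * (M₀ * dist z z') ≤ 0 := mul_nonpos_of_nonneg_of_nonpos hA0 h5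
          nlinarith
      calc eVariationOn η (Set.Icc 0 1) ≤ _ := h1
        _ ≤ _ := h2
        _ = _ := h3
        _ ≤ ENNReal.ofReal (C * dist w w') := ENNReal.ofReal_le_ofReal h4
    have hC0 : (0:ℝ) < C := lt_of_lt_of_le one_pos (le_max_right _ _)
    have hℓ0 : (0:ℝ) ≤ C * dist w w' := mul_nonneg hC0.le dist_nonneg
    -- apply the key estimate to f = φ - id
    have hkey := key_curve_estimate (f := fun w'' => g (z₀ + B (w'' - z₀)) - w'')
      (f' := fun w'' => (fderiv ℝ g (ψ w'')).comp B
        - ContinuousLinearMap.id ℝ (EuclideanSpace ℝ (Fin (d + 1))))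
      hUopen hδpos.le
      (fun x hx => (hφd x hx).sub (hasFDerivAt_id x))
      hDφ hηc hηU hℓ0 hηvar
    have hη0 : η 0 = w := by rw [hη]; simp only [hγ0]; exact hw.symm
    have hη1 : η 1 = w' := by rw [hη]; simp only [hγ1]; exact hw'.symm
    rw [hη0, hη1] at hkey
    set a : EuclideanSpace ℝ (Fin (d + 1)) := g (z₀ + B (w - z₀)) with ha
    set b : EuclideanSpace ℝ (Fin (d + 1)) := g (z₀ + B (w' - z₀)) with hb
    have hkey' : ‖(b - w') - (a - w)‖ ≤ δ * (C * ‖w - w'‖) := by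
      rw [← dist_eq_norm]; exact hkey
    have htri1 : ‖a - b‖ ≤ ‖w - w'‖ + ‖(b - w') - (a - w)‖ := by
      have h5 : a - b = (w - w') - ((b - w') - (a - w)) := by abel
      rw [h5]
      exact norm_sub_le _ _
    have htri2 : ‖w - w'‖ ≤ ‖a - b‖ + ‖(b - w') - (a - w)‖ := by
      have h5 : w - w' = (a - b) + ((b - w') - (a - w)) := by abel
      rw [h5]
      exact norm_add_le _ _
    have hX0 : 0 ≤ ‖(b - w') - (a - w)‖ := norm_nonneg _
    constructor
    · rw [dist_eq_norm, dist_eq_norm]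
      nlinarith
    · rw [dist_eq_norm, dist_eq_norm]
      nlinarith
  · -- derivative estimate
    rintro w ⟨z, hz, rfl⟩
    beta_reduce
    have hwU : (z₀ + A (z - z₀)) ∈ U := hLmem z hz
    rw [(hφd _ hwU).fderiv]
    exact hDφ _ hwU

end
end

section
/- Fix ρ = 1/1000, c₀ = 1/500, K = 10⁴/ρ, A₀ = 1000√d/(c₀ρ), and for k ≥ 0 put r_k = 10^{-k} and let s(k) be the integer with 50ρ^{s(k)} ≤ r_k < 50ρ^{s(k)−1}. Let E ⊆ ℝ^{d+1} be closed, 𝒟 a Christ–David lattice for E with parameter ρ, and {P_Q}_{Q∈𝒟} any family of d-dimensional affine planes. For each k ≥ 0 let Y_k = { x_Q : Q ∈ 𝒟_{s(k)}, Q ∩ B(0,A₀) ≠ ∅ }, let X_k = {x_{j,k}}_{j∈J_k} ⊆ Y_k be an r_k-net of Y_k (points of X_k are r_k-separated and Y_k ⊆ ⋃_{x∈X_k} B(x, r_k)), write x_{j,k} = x_{Q_{j,k}}, B_{j,k} = B(x_{j,k}, r_k) and P_{j,k} = P_{Q_{j,k}}. For k ≥ 1 and y ∈ ℝ^{d+1},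 define ε'_k(y) = sup{ d_{B(x_{i,l},100 r_l)}(P_{j,k}, P_{i,l}) : j ∈ J_k, l ∈ {k−1, k}, i ∈ J_l, y ∈ 10B_{j,k} ∩ 11B_{i,l} }, and for Q ∈ 𝒟 define ε(Q) = sup{ d_{K B_R}(P_U, P_R) : U, R ∈ 𝒟, k(R) ∈ {k(Q), k(Q)−1}, k(U) = k(Q), x_Q ∈ (K/10)B_U ∩ (K/10)B_R }. Then for any k ≥ 1, any Q ∈ 𝒟_{s(k)}, and any z ∈ ℝ^{d+1} with |z − x_Q| < 200ρ^{-1}ℓ(Q), one has ε'_k(z) ≤ K·ε(Q). -/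
open Metric MeasureTheory Set
open scoped ENNReal NNReal

noncomputable section

/-- The set of points of the affine plane through `p` with direction `V`. -/
def planeSet {n : ℕ} (p : EuclideanSpace ℝ (Fin n)) (V : Submodule ℝ (EuclideanSpace ℝ (Fin n))) :
    Set (EuclideanSpace ℝ (Fin n)) := {y | y - p ∈ V}

/-- Normalized distance `d_B(E', F)` between two sets inside a bounded set `B`:
`(2/diam B) · max( sup_{y ∈ E'∩B} dist(y,F), sup_{y ∈ F∩B} dist(y,E') )`. -/
def dIn {n : ℕ} (B E' F : Set (EuclideanSpace ℝ (Fin n))) : ℝ :=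
  (2 / Metric.diam B) *
    max (sSup ((fun y => Metric.infDist y F) '' (E' ∩ B)))
        (sSup ((fun y => Metric.infDist y E') '' (F ∩ B)))

/-- A Christ–David lattice of "cubes" for a closed set `E ⊆ ℝ^n` with parameter `ρ < 1/1000`
and `c₀ = 1/500`: for each `k ∈ ℤ`, `gen k` is the family of cubes of generation `k`, which are
Borel sets covering `E`, pairwise nested or disjoint, comparable to balls of radius
`ℓ(Q) = 5ρ^k` around their centers, and whose centers form a nested sequence of maximal
`ρ^k`-separated nets of `E`. -/
structure CDLattice (n : ℕ) (E : Set (EuclideanSpace ℝ (Fin n))) (ρ : ℝ) where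
  gen : ℤ → Set (Set (EuclideanSpace ℝ (Fin n)))
  ctr : ℤ → Set (EuclideanSpace ℝ (Fin n)) → EuclideanSpace ℝ (Fin n)
  borel : ∀ k : ℤ, ∀ Q ∈ gen k, MeasurableSet Q
  cover : ∀ k : ℤ, E = ⋃ Q ∈ gen k, Q
  nested : ∀ k l : ℤ, ∀ Q ∈ gen k, ∀ Q' ∈ gen l, (Q ∩ Q').Nonempty → Q ⊆ Q' ∨ Q' ⊆ Q
  ctr_mem : ∀ k : ℤ, ∀ Q ∈ gen k, ctr k Q ∈ E
  ball_inter_subset : ∀ k : ℤ, ∀ Q ∈ gen k,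
    Metric.ball (ctr k Q) ((1 / 500) * (5 * ρ ^ k)) ∩ E ⊆ Q
  subset_ball : ∀ k : ℤ, ∀ Q ∈ gen k, Q ⊆ Metric.ball (ctr k Q) (5 * ρ ^ k)
  separated : ∀ k : ℤ, ∀ Q ∈ gen k, ∀ Q' ∈ gen k, Q ≠ Q' → ρ ^ k ≤ dist (ctr k Q) (ctr k Q')
  net : ∀ k : ℤ, E ⊆ ⋃ Q ∈ gen k, Metric.closedBall (ctr k Q) (ρ ^ k)
  ctr_nested : ∀ k : ℤ, ∀ Q ∈ gen k, ∃ Q' ∈ gen (k + 1), ctr (k + 1) Q' = ctr k Q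

/-- The side length `ℓ(Q) = 5ρ^k` of a generation-`k` cube. -/
def sideLen (ρ : ℝ) (k : ℤ) : ℝ := 5 * ρ ^ k


/-- The coefficient `ε(Q)` adapted to the lattice `D` and the plane family `(Pp, PV)`:
`ε(Q) = sup { d_{K B_R}(P_U, P_R) : k(R) ∈ {k(Q), k(Q)−1}, k(U) = k(Q),
x_Q ∈ (K/10)B_U ∩ (K/10)B_R }`. -/
def epsCD {n : ℕ} {E : Set (EuclideanSpace ℝ (Fin n))} {ρ : ℝ} (D : CDLattice n E ρ)
    (Pp : ℤ → Set (EuclideanSpace ℝ (Fin n)) → EuclideanSpace ℝ (Fin n))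
    (PV : ℤ → Set (EuclideanSpace ℝ (Fin n)) → Submodule ℝ (EuclideanSpace ℝ (Fin n)))
    (K : ℝ) (kQ : ℤ) (Q : Set (EuclideanSpace ℝ (Fin n))) : ℝ :=
  sSup {t : ℝ | ∃ (kR : ℤ) (U R : Set (EuclideanSpace ℝ (Fin n))),
    (kR = kQ ∨ kR = kQ - 1) ∧ U ∈ D.gen kQ ∧ R ∈ D.gen kR ∧
    D.ctr kQ Q ∈ Metric.ball (D.ctr kQ U) ((K / 10) * sideLen ρ kQ) ∧
    D.ctr kQ Q ∈ Metric.ball (D.ctr kR R) ((K / 10) * sideLen ρ kR) ∧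
    t = dIn (Metric.ball (D.ctr kR R) (K * sideLen ρ kR))
          (planeSet (Pp kQ U) (PV kQ U)) (planeSet (Pp kR R) (PV kR R))}

/-- The David–Toro coefficient `ε'_k(y)` adapted to the nets `N k ⊆ 𝒟_{s(k)}`, with
`r_k = 10^{-k}`:
`ε'_k(y) = sup { d_{B(x_{i,l},100 r_l)}(P_{j,k}, P_{i,l}) : j ∈ J_k, l ∈ {k−1,k}, i ∈ J_l,
y ∈ 10B_{j,k} ∩ 11B_{i,l} }`. -/
def epsPrime {n : ℕ} {E : Set (EuclideanSpace ℝ (Fin n))} {ρ : ℝ} (D : CDLattice n E ρ)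
    (Pp : ℤ → Set (EuclideanSpace ℝ (Fin n)) → EuclideanSpace ℝ (Fin n))
    (PV : ℤ → Set (EuclideanSpace ℝ (Fin n)) → Submodule ℝ (EuclideanSpace ℝ (Fin n)))
    (s : ℕ → ℤ) (N : ℕ → Set (Set (EuclideanSpace ℝ (Fin n)))) (k : ℕ)
    (y : EuclideanSpace ℝ (Fin n)) : ℝ :=
  sSup {t : ℝ | ∃ (Q : Set (EuclideanSpace ℝ (Fin n))) (l : ℕ)
      (R : Set (EuclideanSpace ℝ (Fin n))),
    Q ∈ N k ∧ (l = k - 1 ∨ l = k) ∧ R ∈ N l ∧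
    y ∈ Metric.ball (D.ctr (s k) Q) (10 * (10 : ℝ) ^ (-(k : ℤ))) ∧
    y ∈ Metric.ball (D.ctr (s l) R) (11 * (10 : ℝ) ^ (-(l : ℤ))) ∧
    t = dIn (Metric.ball (D.ctr (s l) R) (100 * (10 : ℝ) ^ (-(l : ℤ))))
          (planeSet (Pp (s k) Q) (PV (s k) Q)) (planeSet (Pp (s l) R) (PV (s l) R))}


lemma my_sSup_img_nonneg {n : ℕ} (F S : Set (EuclideanSpace ℝ (Fin n))) :
    0 ≤ sSup ((fun y => Metric.infDist y F) '' S) :=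
  Real.sSup_nonneg fun _ hx => by
    obtain ⟨y, -, rfl⟩ := hx; exact infDist_nonneg

lemma dIn_nonneg {n : ℕ} (B E' F : Set (EuclideanSpace ℝ (Fin n))) : 0 ≤ dIn B E' F :=
  mul_nonneg (div_nonneg (by norm_num) diam_nonneg)
    (le_trans (my_sSup_img_nonneg F (E' ∩ B)) (le_max_left _ _))

lemma my_diam_ball {n : ℕ} (x : EuclideanSpace ℝ (Fin (n + 1))) {r : ℝ} (hr : 0 < r) :
    Metric.diam (Metric.ball x r) = 2 * r := by
  refine le_antisymm (diam_ball hr.le) ?_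
  obtain ⟨v, hv⟩ := exists_ne (0 : EuclideanSpace ℝ (Fin (n + 1)))
  set u : EuclideanSpace ℝ (Fin (n + 1)) := (↑‖v‖)⁻¹ • v with hu
  have hnu : ‖u‖ = 1 := norm_smul_inv_norm hv
  refine le_of_forall_pos_le_add fun ε hε => ?_
  set t : ℝ := r - min r ε / 2 with ht
  have ht0 : 0 ≤ t := by
    have : min r ε ≤ r := min_le_left _ _
    simp only [ht]; linarith
  have htr : t < r := by
    have : 0 < min r ε := lt_min hr hε
    simp only [ht]; linarith
  have ha : x + t • u ∈ ball x r := by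
    rw [mem_ball, dist_eq_norm]
    have : x + t • u - x = t • u := by abel
    rw [this, norm_smul, hnu, mul_one, Real.norm_eq_abs, abs_of_nonneg ht0]
    exact htr
  have hb : x - t • u ∈ ball x r := by
    rw [mem_ball, dist_eq_norm]
    have : x - t • u - x = (-t) • u := by module
    rw [this, norm_smul, hnu, mul_one, Real.norm_eq_abs, abs_neg, abs_of_nonneg ht0]
    exact htr
  have hd : dist (x + t • u) (x - t • u) = 2 * t := by
    rw [dist_eq_norm]
    have : x + t • u - (x - t • u) = (2 * t) • u := by module
    rw [this, norm_smul, hnu, mul_one, Real.norm_eq_abs, abs_of_nonneg (by linarith)]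
  have := dist_le_diam_of_mem isBounded_ball ha hb
  rw [hd] at this
  have hmin : min r ε ≤ ε := min_le_right _ _
  simp only [ht] at this
  linarith

lemma my_sSup_infDist_mono {n : ℕ} (x : EuclideanSpace ℝ (Fin n)) {r1 r2 : ℝ} (h12 : r1 ≤ r2)
    (A F : Set (EuclideanSpace ℝ (Fin n))) :
    sSup ((fun y => Metric.infDist y F) '' (A ∩ ball x r1))
      ≤ sSup ((fun y => Metric.infDist y F) '' (A ∩ ball x r2)) := by
  rcases (A ∩ ball x r1).eq_empty_or_nonempty with h | h
  · rw [h, image_empty, Real.sSup_empty]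
    exact my_sSup_img_nonneg _ _
  · refine csSup_le_csSup ?_ (h.image _) (image_mono (inter_subset_inter_right _ (ball_subset_ball h12)))
    refine ⟨infDist x F + r2, fun s hs => ?_⟩
    obtain ⟨y, ⟨-, hyb⟩, rfl⟩ := hs
    calc Metric.infDist y F ≤ infDist x F + dist y x := infDist_le_infDist_add_dist
    _ ≤ infDist x F + r2 := by linarith [mem_ball.mp hyb]

lemma dIn_ball_le {n : ℕ} (x : EuclideanSpace ℝ (Fin (n + 1))) {r1 r2 : ℝ} (h1 : 0 < r1)
    (h12 : r1 ≤ r2) (A F : Set (EuclideanSpace ℝ (Fin (n + 1)))) :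
    dIn (ball x r1) A F ≤ (r2 / r1) * dIn (ball x r2) A F := by
  have h2 : 0 < r2 := h1.trans_le h12
  rw [dIn, dIn, my_diam_ball x h1, my_diam_ball x h2]
  have key : max (sSup ((fun y => Metric.infDist y F) '' (A ∩ ball x r1)))
        (sSup ((fun y => Metric.infDist y A) '' (F ∩ ball x r1)))
      ≤ max (sSup ((fun y => Metric.infDist y F) '' (A ∩ ball x r2)))
        (sSup ((fun y => Metric.infDist y A) '' (F ∩ ball x r2))) :=
    max_le_max (my_sSup_infDist_mono x h12 A F) (my_sSup_infDist_mono x h12 F A)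
  have e1 : r2 / r1 * (2 / (2 * r2) * max (sSup ((fun y => Metric.infDist y F) '' (A ∩ ball x r2)))
        (sSup ((fun y => Metric.infDist y A) '' (F ∩ ball x r2))))
      = (2 / (2 * r1)) * max (sSup ((fun y => Metric.infDist y F) '' (A ∩ ball x r2)))
        (sSup ((fun y => Metric.infDist y A) '' (F ∩ ball x r2))) := by
    field_simp
  rw [e1]
  exact mul_le_mul_of_nonneg_left key (by positivity)

lemma finite_of_separated {X : Type*} [MetricSpace X] [ProperSpace X] {A : Set X} {r : ℝ}
    (hr : 0 < r) {x : X} {c : ℝ} (hA : ∀ a ∈ A, dist x a ≤ c)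
    (hsep : ∀ a ∈ A, ∀ b ∈ A, a ≠ b → r ≤ dist a b) : A.Finite := by
  by_contra hinf
  have hinf' : A.Infinite := hinf
  obtain ⟨y, -, hy⟩ := hinf'.exists_accPt_of_subset_isCompact (isCompact_closedBall x c)
    (fun a ha => mem_closedBall'.mpr (hA a ha))
  rw [accPt_iff_nhds] at hy
  obtain ⟨a, ⟨haU, haA⟩, hay⟩ := hy (ball y (r / 2)) (ball_mem_nhds _ (by positivity))
  obtain ⟨b, ⟨hbU, hbA⟩, hby⟩ := hy (ball y (min (r / 2) (dist a y)))
    (ball_mem_nhds _ (lt_min (by positivity) (dist_pos.mpr hay)))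
  have hab : a ≠ b := by
    intro h
    have := mem_ball.mp hbU
    rw [← h] at this
    exact absurd (lt_of_lt_of_le this (min_le_right _ _)) (lt_irrefl _)
  have h1 := hsep a haA b hbA hab
  have h2 := mem_ball.mp haU
  have h3 := lt_of_lt_of_le (mem_ball.mp hbU) (min_le_left _ _)
  have := dist_triangle a y b
  rw [dist_comm y b] at this
  linarith [this]


lemma finite_gen_ball {n : ℕ} {E : Set (EuclideanSpace ℝ (Fin n))} {ρ : ℝ}
    (D : CDLattice n E ρ) (hρ : 0 < ρ) (κ : ℤ) (x : EuclideanSpace ℝ (Fin n)) (c : ℝ) :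
    {U | U ∈ D.gen κ ∧ dist x (D.ctr κ U) < c}.Finite := by
  have hinj : Set.InjOn (D.ctr κ) {U | U ∈ D.gen κ ∧ dist x (D.ctr κ U) < c} := by
    intro U hU V hV h
    by_contra hne
    have h2 := D.separated κ U hU.1 V hV.1 hne
    rw [h, dist_self] at h2
    exact absurd h2 (not_le.mpr (zpow_pos hρ κ))
  refine Set.Finite.of_finite_image ?_ hinj
  refine finite_of_separated (zpow_pos hρ κ) (x := x) (c := c) ?_ ?_
  · rintro p ⟨U, hU, rfl⟩; exact hU.2.le
  · rintro p ⟨U, hU, rfl⟩ q ⟨V, hV, rfl⟩ hpq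
    exact D.separated κ U hU.1 V hV.1 (fun h => hpq (by rw [h]))

lemma bddAbove_epsCD_set {n : ℕ} {E : Set (EuclideanSpace ℝ (Fin n))} {ρ : ℝ}
    (D : CDLattice n E ρ) (hρ : 0 < ρ)
    (Pp : ℤ → Set (EuclideanSpace ℝ (Fin n)) → EuclideanSpace ℝ (Fin n))
    (PV : ℤ → Set (EuclideanSpace ℝ (Fin n)) → Submodule ℝ (EuclideanSpace ℝ (Fin n)))
    (K : ℝ) (kQ : ℤ) (Q : Set (EuclideanSpace ℝ (Fin n))) :
    BddAbove {t : ℝ | ∃ (kR : ℤ) (U R : Set (EuclideanSpace ℝ (Fin n))),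
      (kR = kQ ∨ kR = kQ - 1) ∧ U ∈ D.gen kQ ∧ R ∈ D.gen kR ∧
      D.ctr kQ Q ∈ Metric.ball (D.ctr kQ U) ((K / 10) * sideLen ρ kQ) ∧
      D.ctr kQ Q ∈ Metric.ball (D.ctr kR R) ((K / 10) * sideLen ρ kR) ∧
      t = dIn (Metric.ball (D.ctr kR R) (K * sideLen ρ kR))
            (planeSet (Pp kQ U) (PV kQ U)) (planeSet (Pp kR R) (PV kR R))} := by
  classical
  set x := D.ctr kQ Q
  set f : ℤ × Set (EuclideanSpace ℝ (Fin n)) × Set (EuclideanSpace ℝ (Fin n)) → ℝ :=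
    fun p => dIn (Metric.ball (D.ctr p.1 p.2.2) (K * sideLen ρ p.1))
      (planeSet (Pp kQ p.2.1) (PV kQ p.2.1)) (planeSet (Pp p.1 p.2.2) (PV p.1 p.2.2)) with hf
  set 𝒰 : Set (Set (EuclideanSpace ℝ (Fin n))) :=
    {U | U ∈ D.gen kQ ∧ dist x (D.ctr kQ U) < (K / 10) * sideLen ρ kQ} with hu
  set ℛ₁ : Set (Set (EuclideanSpace ℝ (Fin n))) :=
    {R | R ∈ D.gen kQ ∧ dist x (D.ctr kQ R) < (K / 10) * sideLen ρ kQ} with hr1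
  set ℛ₂ : Set (Set (EuclideanSpace ℝ (Fin n))) :=
    {R | R ∈ D.gen (kQ - 1) ∧ dist x (D.ctr (kQ - 1) R) < (K / 10) * sideLen ρ (kQ - 1)} with hr2
  have hS : (({kQ} : Set ℤ) ×ˢ (𝒰 ×ˢ ℛ₁) ∪ ({kQ - 1} : Set ℤ) ×ˢ (𝒰 ×ˢ ℛ₂)).Finite := by
    refine Set.Finite.union (Set.Finite.prod (Set.finite_singleton _)
      (Set.Finite.prod ?_ ?_)) (Set.Finite.prod (Set.finite_singleton _)
      (Set.Finite.prod ?_ ?_)) <;>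
      exact finite_gen_ball D hρ _ x _
  refine BddAbove.mono ?_ (hS.image f).bddAbove
  rintro t ⟨kR, U, R, hkR, hU, hR, hb1, hb2, rfl⟩
  refine ⟨(kR, U, R), ?_, rfl⟩
  rcases hkR with rfl | rfl
  · exact Or.inl ⟨rfl, ⟨hU, Metric.mem_ball.mp hb1⟩, ⟨hR, Metric.mem_ball.mp hb2⟩⟩
  · exact Or.inr ⟨rfl, ⟨hU, Metric.mem_ball.mp hb1⟩, ⟨hR, Metric.mem_ball.mp hb2⟩⟩


lemma epsCD_nonneg {n : ℕ} {E : Set (EuclideanSpace ℝ (Fin n))} {ρ : ℝ} (D : CDLattice n E ρ)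
    (Pp : ℤ → Set (EuclideanSpace ℝ (Fin n)) → EuclideanSpace ℝ (Fin n))
    (PV : ℤ → Set (EuclideanSpace ℝ (Fin n)) → Submodule ℝ (EuclideanSpace ℝ (Fin n)))
    (K : ℝ) (kQ : ℤ) (Q : Set (EuclideanSpace ℝ (Fin n))) :
    0 ≤ epsCD D Pp PV K kQ Q := by
  refine Real.sSup_nonneg ?_
  rintro t ⟨kR, U, R, -, -, -, -, -, rfl⟩
  exact dIn_nonneg _ _ _

lemma dIn_le_epsCD {n : ℕ} {E : Set (EuclideanSpace ℝ (Fin n))} {ρ : ℝ} (D : CDLattice n E ρ)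
    (hρ : 0 < ρ)
    (Pp : ℤ → Set (EuclideanSpace ℝ (Fin n)) → EuclideanSpace ℝ (Fin n))
    (PV : ℤ → Set (EuclideanSpace ℝ (Fin n)) → Submodule ℝ (EuclideanSpace ℝ (Fin n)))
    (K : ℝ) (kQ : ℤ) (Q : Set (EuclideanSpace ℝ (Fin n)))
    {kR : ℤ} {U R : Set (EuclideanSpace ℝ (Fin n))}
    (h1 : kR = kQ ∨ kR = kQ - 1) (h2 : U ∈ D.gen kQ) (h3 : R ∈ D.gen kR)
    (h4 : D.ctr kQ Q ∈ Metric.ball (D.ctr kQ U) ((K / 10) * sideLen ρ kQ))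
    (h5 : D.ctr kQ Q ∈ Metric.ball (D.ctr kR R) ((K / 10) * sideLen ρ kR)) :
    dIn (Metric.ball (D.ctr kR R) (K * sideLen ρ kR))
      (planeSet (Pp kQ U) (PV kQ U)) (planeSet (Pp kR R) (PV kR R))
      ≤ epsCD D Pp PV K kQ Q :=
  le_csSup (bddAbove_epsCD_set D hρ Pp PV K kQ Q) ⟨kR, U, R, h1, h2, h3, h4, h5, rfl⟩

/-- **Lemma `l:epsilonQ`**: with `ρ = 1/1000`, `c₀ = 1/500`, `K = 10⁴/ρ`,
`A₀ = 1000√d/(c₀ρ)`, `r_k = 10^{-k}` and `50ρ^{s(k)} ≤ r_k < 50ρ^{s(k)−1}`, if the points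
`X_k = {x_Q : Q ∈ N k}` form `r_k`-nets of the centers `Y_k` of generation-`s(k)` cubes
meeting `B(0,A₀)`, then for every `k ≥ 1`, every `Q ∈ 𝒟_{s(k)}` and every `z` with
`|z − x_Q| < 200ρ⁻¹ℓ(Q)` one has `ε'_k(z) ≤ K·ε(Q)`. -/
theorem epsPrime_le_epsQ (d : ℕ) (E : Set (EuclideanSpace ℝ (Fin (d + 1))))
    (hE : IsClosed E)
    (D : CDLattice (d + 1) E (1 / 1000))
    (Pp : ℤ → Set (EuclideanSpace ℝ (Fin (d + 1))) → EuclideanSpace ℝ (Fin (d + 1)))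
    (PV : ℤ → Set (EuclideanSpace ℝ (Fin (d + 1))) →
      Submodule ℝ (EuclideanSpace ℝ (Fin (d + 1))))
    (hPV : ∀ k : ℤ, ∀ Q ∈ D.gen k, Module.finrank ℝ (PV k Q) = d)
    (s : ℕ → ℤ)
    (hs : ∀ k : ℕ, 50 * (1 / 1000 : ℝ) ^ s k ≤ (10 : ℝ) ^ (-(k : ℤ)) ∧
      (10 : ℝ) ^ (-(k : ℤ)) < 50 * (1 / 1000 : ℝ) ^ (s k - 1))
    (N : ℕ → Set (Set (EuclideanSpace ℝ (Fin (d + 1)))))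
    -- every selected cube is a generation-`s(k)` cube meeting `B(0, A₀)`
    (hNsub : ∀ k : ℕ, ∀ Q ∈ N k, Q ∈ D.gen (s k) ∧
      (Q ∩ Metric.ball 0 ((1000 * Real.sqrt d) / ((1 / 500) * (1 / 1000)))).Nonempty)
    -- the centers of the selected cubes are `r_k`-separated
    (hNsep : ∀ k : ℕ, ∀ Q ∈ N k, ∀ Q' ∈ N k, Q ≠ Q' →
      (10 : ℝ) ^ (-(k : ℤ)) ≤ dist (D.ctr (s k) Q) (D.ctr (s k) Q'))
    -- and they form an `r_k`-net of `Y_k`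
    (hNnet : ∀ k : ℕ, ∀ Q ∈ D.gen (s k),
      (Q ∩ Metric.ball 0 ((1000 * Real.sqrt d) / ((1 / 500) * (1 / 1000)))).Nonempty →
      ∃ Q' ∈ N k, dist (D.ctr (s k) Q) (D.ctr (s k) Q') < (10 : ℝ) ^ (-(k : ℤ))) :
    ∀ k : ℕ, 1 ≤ k → ∀ Q ∈ D.gen (s k), ∀ z : EuclideanSpace ℝ (Fin (d + 1)),
      dist z (D.ctr (s k) Q) < 200 * (1 / 1000 : ℝ)⁻¹ * sideLen (1 / 1000) (s k) →
      epsPrime D Pp PV s N k z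
        ≤ (10 ^ 4 / (1 / 1000 : ℝ)) * epsCD D Pp PV (10 ^ 4 / (1 / 1000 : ℝ)) (s k) Q := by
  intro k hk Q hQ z hz
  have hρ : (0:ℝ) < 1/1000 := by norm_num
  have hpow : ∀ m : ℤ, (1/1000:ℝ) ^ (m - 1) = 1000 * (1/1000:ℝ) ^ m := by
    intro m
    rw [zpow_sub_one₀ (by norm_num : (1/1000:ℝ) ≠ 0)]
    norm_num [mul_comm]
  have hKc : (10:ℝ)^4 / (1/1000:ℝ) = 10000000 := by norm_num
  unfold epsPrime
  refine Real.sSup_le ?_ (mul_nonneg (by norm_num) (epsCD_nonneg D Pp PV _ _ Q))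
  rintro t ⟨Q', l, R, hQ'N, hl, hRN, hz1, hz2, rfl⟩
  obtain ⟨hQ'gen, -⟩ := hNsub k Q' hQ'N
  obtain ⟨hRgen, -⟩ := hNsub l R hRN
  set ρk : ℝ := (1/1000:ℝ) ^ (s k) with hρk
  set ρl : ℝ := (1/1000:ℝ) ^ (s l) with hρl
  set rk : ℝ := (10:ℝ) ^ (-(k:ℤ)) with hrk
  set rl : ℝ := (10:ℝ) ^ (-(l:ℤ)) with hrl
  have hρkpos : 0 < ρk := zpow_pos hρ _
  have hρlpos : 0 < ρl := zpow_pos hρ _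
  have hrkpos : 0 < rk := zpow_pos (by norm_num) _
  have hrlpos : 0 < rl := zpow_pos (by norm_num) _
  have hrk1 : 50 * ρk ≤ rk := (hs k).1
  have hrk2 : rk < 50000 * ρk := by
    have h := (hs k).2
    rw [hpow] at h
    linarith
  have hrl1 : 50 * ρl ≤ rl := (hs l).1
  have hrl2 : rl < 50000 * ρl := by
    have h := (hs l).2
    rw [hpow] at h
    linarith
  -- the generation dichotomy
  have hκ : s l = s k ∨ s l = s k - 1 := by
    rcases hl with h | h
    · subst h
      have hc : (((k-1 : ℕ)) : ℤ) = (k:ℤ) - 1 := by omega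
      have h10 : (10:ℝ) ^ (-(((k-1:ℕ)):ℤ)) = 10 * (10:ℝ) ^ (-(k:ℤ)) := by
        rw [hc, show -((k:ℤ)-1) = -(k:ℤ)+1 by ring,
          zpow_add₀ (by norm_num : (10:ℝ) ≠ 0), zpow_one]
        ring
      obtain ⟨hb1, hb2⟩ := hs (k-1)
      rw [h10] at hb1 hb2
      obtain ⟨ha1, ha2⟩ := hs k
      have e1 : (1/1000:ℝ) ^ (s k) < (1/1000:ℝ) ^ (s (k-1) - 1) := by
        linarith
      have f1 := (zpow_lt_zpow_iff_right_of_lt_one₀ hρ (by norm_num)).mp e1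
      have e2 : (1/1000:ℝ) ^ (s (k-1)) < (1/1000:ℝ) ^ (s k - 1 - 1) := by
        rw [hpow (s k - 1)]
        have hx : (0:ℝ) < (1/1000:ℝ) ^ (s k - 1) := zpow_pos hρ _
        nlinarith
      have f2 := (zpow_lt_zpow_iff_right_of_lt_one₀ hρ (by norm_num)).mp e2
      omega
    · subst h
      left; rfl
  have hslk : s l ≤ s k := by rcases hκ with h | h <;> omega
  have hρlk : ρk ≤ ρl :=
    zpow_le_zpow_right_of_le_one₀ (by norm_num) (by norm_num) hslk
  -- distance bounds
  have hz' : dist z (D.ctr (s k) Q) < 1000000 * ρk := by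
    have hc : 200 * ((1:ℝ)/1000)⁻¹ * sideLen (1/1000) (s k) = 1000000 * ρk := by
      rw [sideLen]; norm_num [hρk]; ring
    rw [hc] at hz
    exact hz
  have hd1 : dist z (D.ctr (s k) Q') < 10 * rk := mem_ball.mp hz1
  have hd2 : dist z (D.ctr (s l) R) < 11 * rl := mem_ball.mp hz2
  -- ball memberships for epsCD
  have hm1 : D.ctr (s k) Q ∈ Metric.ball (D.ctr (s k) Q')
      (((10:ℝ)^4 / (1/1000) / 10) * sideLen (1/1000) (s k)) := by
    rw [mem_ball]
    have hc : ((10:ℝ)^4 / (1/1000) / 10) * sideLen (1/1000) (s k) = 5000000 * ρk := by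
      rw [sideLen]; norm_num [hρk]; ring
    rw [hc]
    calc dist (D.ctr (s k) Q) (D.ctr (s k) Q')
        ≤ dist (D.ctr (s k) Q) z + dist z (D.ctr (s k) Q') := dist_triangle _ _ _
      _ = dist z (D.ctr (s k) Q) + dist z (D.ctr (s k) Q') := by rw [dist_comm]
      _ < 5000000 * ρk := by nlinarith
  have hm2 : D.ctr (s k) Q ∈ Metric.ball (D.ctr (s l) R)
      (((10:ℝ)^4 / (1/1000) / 10) * sideLen (1/1000) (s l)) := by
    rw [mem_ball]
    have hc : ((10:ℝ)^4 / (1/1000) / 10) * sideLen (1/1000) (s l) = 5000000 * ρl := by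
      rw [sideLen]; norm_num [hρl]; ring
    rw [hc]
    calc dist (D.ctr (s k) Q) (D.ctr (s l) R)
        ≤ dist (D.ctr (s k) Q) z + dist z (D.ctr (s l) R) := dist_triangle _ _ _
      _ = dist z (D.ctr (s k) Q) + dist z (D.ctr (s l) R) := by rw [dist_comm]
      _ < 5000000 * ρl := by nlinarith
  -- compare the two dIn quantities
  have h100 : (0:ℝ) < 100 * rl := by positivity
  have h12 : 100 * rl ≤ ((10:ℝ)^4 / (1/1000)) * sideLen (1/1000) (s l) := by
    rw [sideLen, hKc]
    nlinarith
  have step1 := dIn_ball_le (D.ctr (s l) R) h100 h12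
    (planeSet (Pp (s k) Q') (PV (s k) Q')) (planeSet (Pp (s l) R) (PV (s l) R))
  have hratio : ((10:ℝ)^4 / (1/1000)) * sideLen (1/1000) (s l) / (100 * rl)
      ≤ (10:ℝ)^4 / (1/1000) := by
    rw [div_le_iff₀ h100, sideLen, hKc]
    nlinarith
  have ht0nn : 0 ≤ dIn (Metric.ball (D.ctr (s l) R) (((10:ℝ)^4 / (1/1000)) * sideLen (1/1000) (s l)))
      (planeSet (Pp (s k) Q') (PV (s k) Q')) (planeSet (Pp (s l) R) (PV (s l) R)) :=
    dIn_nonneg _ _ _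
  have step2 := mul_le_mul_of_nonneg_right hratio ht0nn
  have step3 : dIn (Metric.ball (D.ctr (s l) R) (((10:ℝ)^4 / (1/1000)) * sideLen (1/1000) (s l)))
      (planeSet (Pp (s k) Q') (PV (s k) Q')) (planeSet (Pp (s l) R) (PV (s l) R))
      ≤ epsCD D Pp PV ((10:ℝ)^4 / (1/1000)) (s k) Q :=
    dIn_le_epsCD D hρ Pp PV _ _ Q hκ hQ'gen hRgen hm1 hm2
  exact step1.trans (step2.trans (mul_le_mul_of_nonneg_left step3 (by norm_num)))

end
end
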